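/- Let C be a finite conjunction of K linear inequalities s^p α ≤ s^q β over size variables whose dependency graph has no increasing cycle. Then C has a linear solution, i.e., a substitution φ with (αφ)↓ ≠ ∞ for all α, satisfying all constraints. Concretely, there exist natural numbers (ω_α) for each variable α of C such that for every constraint s^p α ≤ s^q β in C, ω_α + p ≤ ω_β; then φ mapping α to s^{ω_α} γ for a fresh variable γ is a solution. -/

import Mathlib

/-- Size expressions of the size algebra A: a ::= α | s a | ∞. -/
inductive SExpr : Type
  | var : ℕ → SExpr
  | s : SExpr → SExpr
  | infty : SExpr
deriving DecidableEq

/-- The quasi-ordering ≤_A on size expressions. -/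
inductive SLe : SExpr → SExpr → Prop
  | refl (a) : SLe a a
  | trans {a b c} : SLe a b → SLe b c → SLe a c
  | mon {a b} : SLe a b → SLe (.s a) (.s b)
  | succ {a b} : SLe a b → SLe a (.s b)
  | infty (a) : SLe a .infty

/-- Normal form w.r.t. the rewrite rule s∞ → ∞. -/
def nf : SExpr → SExpr
  | .var α => .var α
  | .infty => .infty
  | .s a =>
    match nf a with
    | .infty => .infty
    | b => .s b

/-- Action of a size substitution on size expressions. -/
def subst (φ : ℕ → SExpr) : SExpr → SExpr
  | .var α => φ α
  | .s a => .s (subst φ a)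
  | .infty => .infty

/-- A linear inequality constraint s^p α ≤ s^q β between size variables. -/
structure LinIneq : Type where
  p : ℕ
  α : ℕ
  q : ℕ
  β : ℕ

/-- φ solves the linear inequality s^p α ≤ s^q β. -/
def SolvesLin (φ : ℕ → SExpr) (e : LinIneq) : Prop :=
  SLe (SExpr.s^[e.p] (φ e.α)) (SExpr.s^[e.q] (φ e.β))

/-- A cycle of a conjunction D of linear inequalities: a nonempty list of
constraints of D whose edges α →^{p−q} β chain up cyclically. -/
def IsCycle (D L : List LinIneq) : Prop :=
  L ≠ [] ∧ (∀ e ∈ L, e ∈ D) ∧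
  ∀ i : Fin L.length,
    (L.get i).β = (L.get ⟨(i + 1) % L.length, Nat.mod_lt _ i.pos⟩).α

/-- The cost of a list of edges: the sum of the labels p − q. -/
def cost (L : List LinIneq) : ℤ :=
  (L.map (fun e => (e.p : ℤ) - (e.q : ℤ))).sum

noncomputable section

instance : DecidableEq LinIneq := Classical.decEq _

lemma cost_append (L₁ L₂ : List LinIneq) : cost (L₁ ++ L₂) = cost L₁ + cost L₂ := by
  simp [cost]

lemma sle_iterate {m n : ℕ} (h : m ≤ n) (a : SExpr) :
    SLe (SExpr.s^[m] a) (SExpr.s^[n] a) := by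
  obtain ⟨k, rfl⟩ := Nat.exists_eq_add_of_le h
  clear h
  induction k with
  | zero => exact SLe.refl _
  | succ k ih =>
    rw [show m + (k + 1) = (m + k) + 1 by omega, Function.iterate_succ_apply']
    exact SLe.succ ih

/-- A path in C ending at b (or empty). -/
def IsPathTo (C : List LinIneq) (b : ℕ) (L : List LinIneq) : Prop :=
  (∀ e ∈ L, e ∈ C) ∧ L.Chain' (fun e f => e.β = f.α) ∧ ∀ e ∈ L.getLast?, e.β = b

def allLists (C : List LinIneq) : ℕ → Finset (List LinIneq)
  | 0 => {[]}
  | n+1 => allLists C n ∪ C.toFinset.biUnion (fun e => (allLists C n).image (e :: ·))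

lemma nil_mem_allLists (C : List LinIneq) (n : ℕ) : [] ∈ allLists C n := by
  induction n with
  | zero => simp [allLists]
  | succ n ih =>
    simp only [allLists, Finset.mem_union]
    exact Or.inl ih

lemma mem_allLists {C : List LinIneq} : ∀ {n : ℕ} {L : List LinIneq},
    (∀ e ∈ L, e ∈ C) → L.length ≤ n → L ∈ allLists C n := by
  intro n
  induction n with
  | zero =>
    intro L h hl
    have : L = [] := List.length_eq_zero_iff.mp (Nat.le_zero.mp hl)
    subst this; simp [allLists]
  | succ n ih =>
    intro L h hl
    cases L with
    | nil => exact nil_mem_allLists C (n+1)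
    | cons e L' =>
      simp only [allLists, Finset.mem_union, Finset.mem_biUnion, Finset.mem_image]
      right
      exact ⟨e, List.mem_toFinset.mpr (h e (by simp)),
        L', ih (fun f hf => h f (by simp [hf])) (by simpa using hl), rfl⟩

lemma getElem_congr_idx' {A : Type*} (l : List A) {i j : ℕ} (h : i = j)
    (hi : i < l.length) (hj : j < l.length) : l[i]'hi = l[j]'hj := by
  subst h; rfl

lemma shrink (C : List LinIneq) (hnocyc : ¬ ∃ L, IsCycle C L ∧ 0 < cost L)
    {L : List LinIneq} {b : ℕ} (hP : IsPathTo C b L) {i j : ℕ}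
    (hij : i < j) (hj : j < L.length)
    (hαα : (L[i]'(lt_trans hij hj)).α = (L[j]'hj).α) :
    ∃ L', IsPathTo C b L' ∧ L'.length < L.length ∧ cost L ≤ cost L' := by
  obtain ⟨hmem, hch, hend⟩ := hP
  have hchain : ∀ k (h : k + 1 < L.length), (L[k]'(by omega)).β = (L[k+1]'h).α := by
    intro k h
    have := List.isChain_iff_getElem.mp hch k (by omega)
    simpa [List.get_eq_getElem] using this
  have hlt : (L.take i).length = i := by rw [List.length_take]; omega
  have hld : (L.drop j).length = L.length - j := by rw [List.length_drop]
  have hlen' : (L.take i ++ L.drop j).length = i + (L.length - j) := by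
    rw [List.length_append, hlt, hld]
  have hget1 : ∀ k (hk : k < i) (h : k < (L.take i ++ L.drop j).length),
      (L.take i ++ L.drop j)[k]'h = L[k]'(by omega) := by
    intro k hk h
    have hk' : k < (L.take i).length := by rw [hlt]; exact hk
    rw [List.getElem_append_left hk', List.getElem_take]
  have hget2 : ∀ k (hk : i ≤ k) (h : k < (L.take i ++ L.drop j).length),
      (L.take i ++ L.drop j)[k]'h = L[j + (k - i)]'(by rw [hlen'] at h; omega) := by
    intro k hk h
    rw [List.getElem_append_right (by rw [hlt]; exact hk), List.getElem_drop]
    exact getElem_congr_idx' L (by rw [hlt]) _ _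
  -- the cycle
  have hLclen : ((L.drop i).take (j - i)).length = j - i := by
    rw [List.length_take, List.length_drop]; omega
  have hLcget : ∀ m (hm : m < ((L.drop i).take (j - i)).length),
      ((L.drop i).take (j - i))[m]'hm = L[i + m]'(by have := hLclen; omega) := by
    intro m hm
    rw [List.getElem_take, List.getElem_drop]
  have hcyc : IsCycle C ((L.drop i).take (j - i)) := by
    refine ⟨?_, ?_, ?_⟩
    · intro hnil; rw [hnil] at hLclen; simp at hLclen; omega
    · intro e he
      exact hmem e (List.mem_of_mem_drop (List.mem_of_mem_take he))
    · intro m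
      have hmlt := m.isLt
      have hL2 := hLclen
      simp only [List.get_eq_getElem]
      rcases Nat.lt_or_ge (m.val + 1) ((L.drop i).take (j - i)).length with hm1 | hm1
      · have e2 : ((L.drop i).take (j - i))[(m.val + 1) % ((L.drop i).take (j - i)).length]'(Nat.mod_lt _ (Nat.lt_of_le_of_lt (Nat.zero_le _) m.isLt))
            = ((L.drop i).take (j - i))[m.val + 1]'hm1 :=
          getElem_congr_idx' _ (Nat.mod_eq_of_lt hm1) _ _
        rw [e2, hLcget m.val m.isLt, hLcget (m.val + 1) hm1]
        calc (L[i + m.val]'(by omega)).β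
            = (L[i + m.val + 1]'(by omega)).α := hchain (i + m.val) (by omega)
          _ = (L[i + (m.val + 1)]'(by omega)).α :=
              congrArg LinIneq.α (getElem_congr_idx' L (by omega) _ _)
      · have hm2 : m.val + 1 = ((L.drop i).take (j - i)).length := by omega
        have e2 : ((L.drop i).take (j - i))[(m.val + 1) % ((L.drop i).take (j - i)).length]'(Nat.mod_lt _ (Nat.lt_of_le_of_lt (Nat.zero_le _) m.isLt))
            = ((L.drop i).take (j - i))[0]'(by omega) :=
          getElem_congr_idx' _ (by rw [hm2]; simp) _ _
        rw [e2, hLcget m.val m.isLt, hLcget 0 (by omega)]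
        calc (L[i + m.val]'(by omega)).β
            = (L[j - 1]'(by omega)).β := congrArg LinIneq.β (getElem_congr_idx' L (by omega) _ _)
          _ = (L[j - 1 + 1]'(by omega)).α := hchain (j - 1) (by omega)
          _ = (L[j]'hj).α := congrArg LinIneq.α (getElem_congr_idx' L (by omega) _ _)
          _ = (L[i]'(by omega)).α := hαα.symm
          _ = (L[i + 0]'(by omega)).α := congrArg LinIneq.α (getElem_congr_idx' L (by omega) _ _)
  have hcost : cost ((L.drop i).take (j - i)) ≤ 0 := by
    by_contra h
    exact hnocyc ⟨(L.drop i).take (j - i), hcyc, by omega⟩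
  have hdec : L = L.take i ++ ((L.drop i).take (j - i) ++ L.drop j) := by
    conv_lhs => rw [← List.take_append_drop i L]
    congr 1
    conv_lhs => rw [← List.take_append_drop (j - i) (L.drop i)]
    congr 1
    rw [List.drop_drop]
    congr 1
    omega
  have hdropne : L.drop j ≠ [] := by
    intro h
    have := congrArg List.length h
    rw [hld] at this
    simp at this
    omega
  refine ⟨L.take i ++ L.drop j, ⟨?_, ?_, ?_⟩, ?_, ?_⟩
  · intro e he
    rcases List.mem_append.mp he with h | h
    · exact hmem e (List.mem_of_mem_take h)
    · exact hmem e (List.mem_of_mem_drop h)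
  · refine List.isChain_iff_getElem.mpr ?_
    intro k hk
    show _ = _
    rw [hlen'] at hk
    rcases Nat.lt_or_ge (k + 1) i with h1 | h1
    · rw [hget1 k (by omega) (by rw [hlen']; omega), hget1 (k+1) h1 (by rw [hlen']; omega)]
      exact hchain k (by omega)
    · rcases Nat.eq_or_lt_of_le h1 with h2 | h2
      · rw [hget1 k (by omega) (by rw [hlen']; omega), hget2 (k+1) h1 (by rw [hlen']; omega)]
        calc (L[k]'(by omega)).β
            = (L[k + 1]'(by omega)).α := hchain k (by omega)
          _ = (L[i]'(by omega)).α := congrArg LinIneq.α (getElem_congr_idx' L (by omega) _ _)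
          _ = (L[j]'hj).α := hαα
          _ = (L[j + (k + 1 - i)]'(by omega)).α :=
              congrArg LinIneq.α (getElem_congr_idx' L (by omega) _ _)
      · rw [hget2 k (by omega) (by rw [hlen']; omega), hget2 (k+1) (by omega) (by rw [hlen']; omega)]
        calc (L[j + (k - i)]'(by omega)).β
            = (L[j + (k - i) + 1]'(by omega)).α := hchain (j + (k - i)) (by omega)
          _ = (L[j + (k + 1 - i)]'(by omega)).α :=
              congrArg LinIneq.α (getElem_congr_idx' L (by omega) _ _)
  · intro e he
    rw [List.getLast?_append_of_ne_nil _ hdropne] at he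
    apply hend
    rw [← List.take_append_drop j L, List.getLast?_append_of_ne_nil _ hdropne]
    exact he
  · rw [hlen']; omega
  · conv_lhs => rw [hdec]
    rw [cost_append, cost_append, cost_append]
    omega

lemma reduce (C : List LinIneq) (hnocyc : ¬ ∃ L, IsCycle C L ∧ 0 < cost L) :
    ∀ (n : ℕ) (L : List LinIneq) (b : ℕ), L.length ≤ n → IsPathTo C b L →
    ∃ L', IsPathTo C b L' ∧ L'.length ≤ (C.map LinIneq.α).toFinset.card ∧ cost L ≤ cost L' := by
  intro n
  induction n with
  | zero =>
    intro L b h hP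
    exact ⟨L, hP, by omega, le_refl _⟩
  | succ n ih =>
    intro L b hlen hP
    by_cases hN : L.length ≤ (C.map LinIneq.α).toFinset.card
    · exact ⟨L, hP, hN, le_refl _⟩
    · have hcard : ((C.map LinIneq.α).toFinset).card < (Finset.univ : Finset (Fin L.length)).card := by
        simp; omega
      have hmaps : ∀ k ∈ (Finset.univ : Finset (Fin L.length)),
          (L.get k).α ∈ (C.map LinIneq.α).toFinset := by
        intro k _
        rw [List.mem_toFinset, List.mem_map]
        exact ⟨L.get k, hP.1 _ (List.get_mem L k), rfl⟩
      obtain ⟨a, -, a', -, hab, heq⟩ := Finset.exists_ne_map_eq_of_card_lt_of_maps_to hcard hmaps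
      obtain ⟨i, j, hij, heq⟩ : ∃ i j : Fin L.length, i < j ∧ (L.get i).α = (L.get j).α := by
        rcases lt_or_gt_of_ne hab with h | h
        exacts [⟨a, a', h, heq⟩, ⟨a', a, h, heq.symm⟩]
      obtain ⟨L', hP', hlt, hc⟩ := shrink C hnocyc hP hij j.isLt
        (by simpa [List.get_eq_getElem] using heq)
      obtain ⟨L'', hP'', hN'', hc'⟩ := ih L' b (by omega) hP'
      exact ⟨L'', hP'', hN'', le_trans hc hc'⟩

end

/-- A conjunction of linear inequalities with no increasing cycle has a linear
solution: there are natural numbers ω_α with ω_α + p ≤ ω_β + q for every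
constraint s^p α ≤ s^q β, and mapping α to s^{ω_α} γ (γ any variable) solves
all constraints. -/
theorem linear_solution_exists (C : List LinIneq)
    (hnocyc : ¬ ∃ L, IsCycle C L ∧ 0 < cost L) :
    ∃ ω : ℕ → ℕ,
      (∀ e ∈ C, ω e.α + e.p ≤ ω e.β + e.q) ∧
      ∀ γ : ℕ, ∀ e ∈ C,
        SolvesLin (fun α => SExpr.s^[ω α] (.var γ)) e := by
  classical
  set N := (C.map LinIneq.α).toFinset.card with hNdef
  have hne : ∀ b, [] ∈ (allLists C N).filter (IsPathTo C b) := by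
    intro b
    refine Finset.mem_filter.mpr ⟨nil_mem_allLists C N, ?_⟩
    refine ⟨by simp, List.isChain_nil, by simp⟩
  set W : ℕ → ℤ := fun b => ((allLists C N).filter (IsPathTo C b)).sup' ⟨[], hne b⟩ cost with hWdef
  have hW0 : ∀ b, 0 ≤ W b := by
    intro b
    calc (0:ℤ) = cost [] := by simp [cost]
      _ ≤ W b := Finset.le_sup' cost (hne b)
  have hkey : ∀ e ∈ C, W e.α + e.p ≤ W e.β + e.q := by
    intro e he
    obtain ⟨L, hL, hsup⟩ := Finset.exists_mem_eq_sup' (⟨[], hne e.α⟩ :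
      ((allLists C N).filter (IsPathTo C e.α)).Nonempty) cost
    have hLP : IsPathTo C e.α L := (Finset.mem_filter.mp hL).2
    have hpath : IsPathTo C e.β (L ++ [e]) := by
      refine ⟨?_, ?_, ?_⟩
      · intro f hf
        rcases List.mem_append.mp hf with h | h
        · exact hLP.1 f h
        · simp at h; subst h; exact he
      · refine List.isChain_append.mpr ⟨hLP.2.1, List.isChain_singleton e, ?_⟩
        intro x hx y hy
        simp only [List.head?_cons, Option.mem_def, Option.some.injEq] at hy
        subst hy
        exact hLP.2.2 x hx
      · intro f hf
        rw [List.getLast?_concat] at hf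
        simp only [Option.mem_def, Option.some.injEq] at hf
        subst hf; rfl
    obtain ⟨L', hP', hlen', hcost'⟩ := reduce C hnocyc (L ++ [e]).length (L ++ [e]) e.β
      (le_refl _) hpath
    have hmem' : L' ∈ (allLists C N).filter (IsPathTo C e.β) :=
      Finset.mem_filter.mpr ⟨mem_allLists hP'.1 hlen', hP'⟩
    have h1 : cost L' ≤ W e.β := Finset.le_sup' cost hmem'
    have h2 : cost (L ++ [e]) = cost L + ((e.p : ℤ) - e.q) := by
      rw [cost_append]; simp [cost]
    have h3 : W e.α = cost L := hsup
    omega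
  have hnat : ∀ e ∈ C, (W e.α).toNat + e.p ≤ (W e.β).toNat + e.q := by
    intro e he
    have h1 := hkey e he
    have h2 := hW0 e.α
    have h3 := hW0 e.β
    omega
  refine ⟨fun b => (W b).toNat, hnat, ?_⟩
  intro γ e he
  show SLe (SExpr.s^[e.p] (SExpr.s^[(W e.α).toNat] (.var γ)))
    (SExpr.s^[e.q] (SExpr.s^[(W e.β).toNat] (.var γ)))
  rw [← Function.iterate_add_apply, ← Function.iterate_add_apply]
  exact sle_iterate (by have := hnat e he; omega) _
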